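/- Let λ > −1/2 be real and let ν ≥ 2 be real. Then for every x ∈ (−1,1], ʳG_ν^{(λ)}(x) = x · ʳG_{ν−1}^{(λ+1)}(x) − ((ν−1)(ν+2λ+1))/(4(λ+1/2)(λ+3/2)) · (1−x²) · ʳG_{ν−2}^{(λ+2)}(x). -/

import Mathlib

open Real

/-- Pochhammer symbol `(a)_n = a (a+1) ⋯ (a+n-1)` for a real base. -/
noncomputable def poch (a : ℝ) (n : ℕ) : ℝ := ∏ i ∈ Finset.range n, (a + (i : ℝ))

/-- The right generalized Gegenbauer function of fractional degree. -/
noncomputable def rG (lam nu x : ℝ) : ℝ :=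
  ∑' j : ℕ, (poch (-nu) j * poch (nu + 2 * lam) j /
    ((j.factorial : ℝ) * poch (lam + 1 / 2) j)) * ((1 - x) / 2) ^ j

open Filter

noncomputable def coef (lam nu : ℝ) (j : ℕ) : ℝ :=
  poch (-nu) j * poch (nu + 2 * lam) j / ((j.factorial : ℝ) * poch (lam + 1 / 2) j)

lemma poch_zero (a : ℝ) : poch a 0 = 1 := by simp [poch]

lemma poch_one' (a : ℝ) (n : ℕ) : poch a (n + 1) = poch a n * (a + n) :=
  Finset.prod_range_succ _ _

lemma poch_one (a : ℝ) (n : ℕ) : poch a (n + 1) = a * poch (a + 1) n := by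
  rw [poch, Finset.prod_range_succ']
  simp only [Nat.cast_zero, add_zero, Nat.cast_add, Nat.cast_one]
  rw [mul_comm, poch]
  congr 1
  refine Finset.prod_congr rfl fun i _ => by ring

lemma poch_two (a : ℝ) (n : ℕ) : poch a (n + 2) = a * (a + 1) * poch (a + 1 + 1) n := by
  rw [show n + 2 = n + 1 + 1 from rfl, poch_one, poch_one]; ring

lemma poch_two' (a : ℝ) (n : ℕ) :
    poch a (n + 2) = a * poch (a + 1) n * (a + 1 + n) := by
  rw [show n + 2 = n + 1 + 1 from rfl, poch_one', poch_one]
  push_cast; ring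

lemma poch_pos {a : ℝ} (ha : 0 < a) (n : ℕ) : 0 < poch a n :=
  Finset.prod_pos fun i _ => by positivity

lemma coef_succ (lam nu : ℝ) (n : ℕ) (hl : 0 < lam + 1 / 2) :
    coef lam nu (n + 1) = coef lam nu n *
      ((((n : ℝ) + -nu) * ((n : ℝ) + (nu + 2 * lam))) /
        (((n : ℝ) + 1) * ((n : ℝ) + (lam + 1 / 2)))) := by
  have hF : (n.factorial : ℝ) ≠ 0 := Nat.cast_ne_zero.2 n.factorial_ne_zero
  have hR : poch (lam + 1 / 2) n ≠ 0 := ne_of_gt (poch_pos hl n)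
  have h1 : ((n : ℝ) + 1) ≠ 0 := by positivity
  have h2 : ((n : ℝ) + (lam + 1 / 2)) ≠ 0 := by positivity
  rw [coef, coef, poch_one', poch_one', poch_one', Nat.factorial_succ]
  push_cast
  field_simp
  ring

lemma tendsto_ratio (a b : ℝ) (hb : 0 < b) :
    Tendsto (fun n : ℕ => ((n : ℝ) + a) / ((n : ℝ) + b)) atTop (nhds 1) := by
  have hbt : Tendsto (fun n : ℕ => (n : ℝ) + b) atTop atTop :=
    tendsto_atTop_add_const_right _ b tendsto_natCast_atTop_atTop
  have h0 : Tendsto (fun n : ℕ => (a - b) / ((n : ℝ) + b)) atTop (nhds 0) :=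
    Tendsto.div_atTop tendsto_const_nhds hbt
  have h1 : Tendsto (fun n : ℕ => 1 + (a - b) / ((n : ℝ) + b)) atTop (nhds 1) := by
    simpa using tendsto_const_nhds.add h0
  refine h1.congr' ?_
  filter_upwards [hbt.eventually_gt_atTop 0] with n hn
  have : ((n : ℝ) + b) ≠ 0 := ne_of_gt hn
  field_simp
  ring

lemma summable_coef (lam nu t : ℝ) (hl : 0 < lam + 1 / 2) (ht : |t| < 1) :
    Summable (fun j : ℕ => coef lam nu j * t ^ j) := by
  set r := (1 + |t|) / 2 with hr
  have hr1 : r < 1 := by rw [hr]; linarith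
  have htr : |t| < r := by rw [hr]; linarith
  apply summable_of_ratio_norm_eventually_le hr1
  have tend1 : Tendsto (fun n : ℕ => ((n : ℝ) + -nu) / ((n : ℝ) + 1)) atTop (nhds 1) :=
    tendsto_ratio _ _ one_pos
  have tend2 : Tendsto (fun n : ℕ => ((n : ℝ) + (nu + 2 * lam)) / ((n : ℝ) + (lam + 1 / 2)))
      atTop (nhds 1) := tendsto_ratio _ _ hl
  have tendg : Tendsto (fun n : ℕ =>
      (((n : ℝ) + -nu) * ((n : ℝ) + (nu + 2 * lam))) /
        (((n : ℝ) + 1) * ((n : ℝ) + (lam + 1 / 2)))) atTop (nhds 1) := by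
    have := tend1.mul tend2
    rw [one_mul] at this
    refine this.congr fun n => ?_
    rw [← mul_div_mul_comm]
  have tend : Tendsto (fun n : ℕ =>
      |t * ((((n : ℝ) + -nu) * ((n : ℝ) + (nu + 2 * lam))) /
        (((n : ℝ) + 1) * ((n : ℝ) + (lam + 1 / 2))))|) atTop (nhds |t|) := by
    have := ((tendsto_const_nhds (x := t)).mul tendg).abs
    simpa using this
  have hev := tend.eventually_lt_const htr
  filter_upwards [hev] with n hn
  have hrec : coef lam nu (n + 1) * t ^ (n + 1) =
      (coef lam nu n * t ^ n) *
        (t * ((((n : ℝ) + -nu) * ((n : ℝ) + (nu + 2 * lam))) /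
          (((n : ℝ) + 1) * ((n : ℝ) + (lam + 1 / 2))))) := by
    rw [coef_succ lam nu n hl]; ring
  rw [hrec, norm_mul]
  calc ‖coef lam nu n * t ^ n‖ * ‖t * _‖ ≤ ‖coef lam nu n * t ^ n‖ * r := by
        apply mul_le_mul_of_nonneg_left _ (norm_nonneg _)
        rw [Real.norm_eq_abs]
        exact hn.le
    _ = r * ‖coef lam nu n * t ^ n‖ := mul_comm _ _

def shift (f : ℕ → ℝ) : ℕ → ℝ
  | 0 => 0
  | n + 1 => f n

lemma summable_shift (f : ℕ → ℝ) (hf : Summable f) : Summable (shift f) := by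
  refine (summable_nat_add_iff 1).mp ?_
  simpa [shift] using hf

lemma tsum_shift (f : ℕ → ℝ) (hf : Summable f) : ∑' n, shift f n = ∑' n, f n := by
  rw [Summable.tsum_eq_zero_add (summable_shift f hf)]
  simp [shift]

lemma coef_eq (lam nu : ℝ) (hl : 0 < lam + 1 / 2) (j : ℕ) :
    coef lam nu j * ((j.factorial : ℝ) * poch (lam + 1 / 2) j) =
      poch (-nu) j * poch (nu + 2 * lam) j := by
  simp only [coef]
  rw [div_mul_cancel₀]
  exact mul_ne_zero (Nat.cast_ne_zero.2 j.factorial_ne_zero) (ne_of_gt (poch_pos hl j))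

set_option maxHeartbeats 1000000 in
lemma coefid (lam nu : ℝ) (hl : 0 < lam + 1 / 2) (n : ℕ) :
    coef lam nu (n + 2) =
      coef (lam + 1) (nu - 1) (n + 2) - 2 * coef (lam + 1) (nu - 1) (n + 1)
      - 4 * ((nu - 1) * (nu + 2 * lam + 1) / (4 * (lam + 1 / 2) * (lam + 3 / 2))) *
          coef (lam + 2) (nu - 2) (n + 1)
      + 4 * ((nu - 1) * (nu + 2 * lam + 1) / (4 * (lam + 1 / 2) * (lam + 3 / 2))) *
          coef (lam + 2) (nu - 2) n := by
  have hF : (n.factorial : ℝ) ≠ 0 := Nat.cast_ne_zero.2 n.factorial_ne_zero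
  have hRpos : 0 < poch (lam + 1 / 2 + 1 + 1) n := poch_pos (by linarith) n
  have hR : poch (lam + 1 / 2 + 1 + 1) n ≠ 0 := ne_of_gt hRpos
  have h1 : lam + 1 / 2 ≠ 0 := ne_of_gt hl
  have h2 : lam + 1 / 2 + 1 ≠ 0 := by linarith
  have h3 : lam + 3 / 2 ≠ 0 := by linarith
  have h4 : ((n : ℝ) + 1) ≠ 0 := by positivity
  have h5 : ((n : ℝ) + 2) ≠ 0 := by positivity
  have h6 : lam + 1 / 2 + 1 + 1 + (n : ℝ) ≠ 0 := by positivity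
  have hK : (4 * (lam + 1 / 2) * (lam + 3 / 2)) ≠ 0 := by
    exact mul_ne_zero (mul_ne_zero four_ne_zero h1) h3
  set c : ℝ := (nu - 1) * (nu + 2 * lam + 1) / (4 * (lam + 1 / 2) * (lam + 3 / 2)) with hc_def
  have hc : c * (4 * (lam + 1 / 2) * (lam + 3 / 2)) = (nu - 1) * (nu + 2 * lam + 1) := by
    rw [hc_def]; exact div_mul_cancel₀ _ hK
  set D : ℝ := (n.factorial : ℝ) * poch (lam + 1 / 2 + 1 + 1) n * (lam + 1 / 2) *
      (lam + 1 / 2 + 1) * (lam + 1 / 2 + 1 + 1 + (n : ℝ)) * ((n : ℝ) + 1) * ((n : ℝ) + 2)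
    with hD_def
  have hD : D * (4 * (lam + 1 / 2) * (lam + 3 / 2)) ≠ 0 := by
    refine mul_ne_zero ?_ hK
    rw [hD_def]
    exact mul_ne_zero (mul_ne_zero (mul_ne_zero (mul_ne_zero (mul_ne_zero
      (mul_ne_zero hF hR) h1) h2) h6) h4) h5
  -- base identities, division-free
  have base_a : coef lam nu (n + 2) * D =
      ((-nu) * (-nu + 1) * poch (-nu + 1 + 1) n) *
        ((nu + 2 * lam) * (nu + 2 * lam + 1) * poch (nu + 2 * lam + 1 + 1) n) *
        (lam + 1 / 2 + 1 + 1 + (n : ℝ)) := by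
    have CE := coef_eq lam nu hl (n + 2)
    rw [poch_two (-nu) n, poch_two (nu + 2 * lam) n, poch_two (lam + 1 / 2) n,
      show (n + 2).factorial = (n + 2) * ((n + 1) * n.factorial) from rfl] at CE
    push_cast at CE
    linear_combination (lam + 1 / 2 + 1 + 1 + (n : ℝ)) * CE
  have base_b2 : coef (lam + 1) (nu - 1) (n + 2) * D =
      ((-nu + 1) * poch (-nu + 1 + 1) n * (-nu + 1 + 1 + (n : ℝ))) *
        ((nu + 2 * lam + 1) * poch (nu + 2 * lam + 1 + 1) n * (nu + 2 * lam + 1 + 1 + (n : ℝ))) *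
        (lam + 1 / 2) := by
    have CE := coef_eq (lam + 1) (nu - 1) (by linarith) (n + 2)
    rw [show -(nu - 1) = -nu + 1 by ring, show nu - 1 + 2 * (lam + 1) = nu + 2 * lam + 1 by ring,
      show lam + 1 + 1 / 2 = lam + 1 / 2 + 1 by ring,
      poch_two' (-nu + 1) n, poch_two' (nu + 2 * lam + 1) n, poch_two' (lam + 1 / 2 + 1) n,
      show (n + 2).factorial = (n + 2) * ((n + 1) * n.factorial) from rfl] at CE
    push_cast at CE
    linear_combination (lam + 1 / 2) * CE
  have base_b1 : coef (lam + 1) (nu - 1) (n + 1) * D =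
      ((-nu + 1) * poch (-nu + 1 + 1) n) * ((nu + 2 * lam + 1) * poch (nu + 2 * lam + 1 + 1) n) *
        ((lam + 1 / 2) * (lam + 1 / 2 + 1 + 1 + (n : ℝ)) * ((n : ℝ) + 2)) := by
    have CE := coef_eq (lam + 1) (nu - 1) (by linarith) (n + 1)
    rw [show -(nu - 1) = -nu + 1 by ring, show nu - 1 + 2 * (lam + 1) = nu + 2 * lam + 1 by ring,
      show lam + 1 + 1 / 2 = lam + 1 / 2 + 1 by ring,
      poch_one (-nu + 1) n, poch_one (nu + 2 * lam + 1) n, poch_one (lam + 1 / 2 + 1) n,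
      show (n + 1).factorial = (n + 1) * n.factorial from rfl] at CE
    push_cast at CE
    linear_combination ((lam + 1 / 2) * (lam + 1 / 2 + 1 + 1 + (n : ℝ)) * ((n : ℝ) + 2)) * CE
  have base_c1 : coef (lam + 2) (nu - 2) (n + 1) * D =
      (poch (-nu + 1 + 1) n * (-nu + 1 + 1 + (n : ℝ))) *
        (poch (nu + 2 * lam + 1 + 1) n * (nu + 2 * lam + 1 + 1 + (n : ℝ))) *
        ((lam + 1 / 2) * (lam + 1 / 2 + 1) * ((n : ℝ) + 2)) := by
    have CE := coef_eq (lam + 2) (nu - 2) (by linarith) (n + 1)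
    rw [show -(nu - 2) = -nu + 1 + 1 by ring,
      show nu - 2 + 2 * (lam + 2) = nu + 2 * lam + 1 + 1 by ring,
      show lam + 2 + 1 / 2 = lam + 1 / 2 + 1 + 1 by ring,
      poch_one' (-nu + 1 + 1) n, poch_one' (nu + 2 * lam + 1 + 1) n,
      poch_one' (lam + 1 / 2 + 1 + 1) n,
      show (n + 1).factorial = (n + 1) * n.factorial from rfl] at CE
    push_cast at CE
    linear_combination ((lam + 1 / 2) * (lam + 1 / 2 + 1) * ((n : ℝ) + 2)) * CE
  have base_c0 : coef (lam + 2) (nu - 2) n * D =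
      poch (-nu + 1 + 1) n * poch (nu + 2 * lam + 1 + 1) n *
        ((lam + 1 / 2) * (lam + 1 / 2 + 1) * (lam + 1 / 2 + 1 + 1 + (n : ℝ)) *
          ((n : ℝ) + 1) * ((n : ℝ) + 2)) := by
    have CE := coef_eq (lam + 2) (nu - 2) (by linarith) n
    rw [show -(nu - 2) = -nu + 1 + 1 by ring,
      show nu - 2 + 2 * (lam + 2) = nu + 2 * lam + 1 + 1 by ring,
      show lam + 2 + 1 / 2 = lam + 1 / 2 + 1 + 1 by ring] at CE
    linear_combination ((lam + 1 / 2) * (lam + 1 / 2 + 1) * (lam + 1 / 2 + 1 + 1 + (n : ℝ)) *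
      ((n : ℝ) + 1) * ((n : ℝ) + 2)) * CE
  apply mul_right_cancel₀ hD
  linear_combination (4 * (lam + 1 / 2) * (lam + 3 / 2)) * base_a
    - (4 * (lam + 1 / 2) * (lam + 3 / 2)) * base_b2
    + (2 * (4 * (lam + 1 / 2) * (lam + 3 / 2))) * base_b1
    + (4 * c * (4 * (lam + 1 / 2) * (lam + 3 / 2))) * base_c1
    - (4 * c * (4 * (lam + 1 / 2) * (lam + 3 / 2))) * base_c0
    + (4 * ((poch (-nu + 1 + 1) n * (-nu + 1 + 1 + (n : ℝ))) *
        (poch (nu + 2 * lam + 1 + 1) n * (nu + 2 * lam + 1 + 1 + (n : ℝ))) *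
        ((lam + 1 / 2) * (lam + 1 / 2 + 1) * ((n : ℝ) + 2))
      - poch (-nu + 1 + 1) n * poch (nu + 2 * lam + 1 + 1) n *
        ((lam + 1 / 2) * (lam + 1 / 2 + 1) * (lam + 1 / 2 + 1 + 1 + (n : ℝ)) *
          ((n : ℝ) + 1) * ((n : ℝ) + 2)))) * hc

lemma poch_one_eval (a : ℝ) : poch a 1 = a := by simp [poch]

lemma coef_zero (lam nu : ℝ) : coef lam nu 0 = 1 := by simp [coef, poch]

lemma key (lam nu t : ℝ) (hl : 0 < lam + 1 / 2) (j : ℕ) :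
    coef lam nu j * t ^ j =
      coef (lam + 1) (nu - 1) j * t ^ j
      - 2 * shift (fun n => coef (lam + 1) (nu - 1) n * t ^ n * t) j
      - (4 * ((nu - 1) * (nu + 2 * lam + 1) / (4 * (lam + 1 / 2) * (lam + 3 / 2)))) *
          shift (fun n => coef (lam + 2) (nu - 2) n * t ^ n * t) j
      + (4 * ((nu - 1) * (nu + 2 * lam + 1) / (4 * (lam + 1 / 2) * (lam + 3 / 2)))) *
          shift (shift (fun n => coef (lam + 2) (nu - 2) n * t ^ n * t ^ 2)) j := by
  have h1 : lam + 1 / 2 ≠ 0 := ne_of_gt hl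
  have h3 : lam + 3 / 2 ≠ 0 := by linarith
  have hK : (4 * (lam + 1 / 2) * (lam + 3 / 2)) ≠ 0 :=
    mul_ne_zero (mul_ne_zero four_ne_zero h1) h3
  set c : ℝ := (nu - 1) * (nu + 2 * lam + 1) / (4 * (lam + 1 / 2) * (lam + 3 / 2)) with hc_def
  have hc : c * (4 * (lam + 1 / 2) * (lam + 3 / 2)) = (nu - 1) * (nu + 2 * lam + 1) := by
    rw [hc_def]; exact div_mul_cancel₀ _ hK
  match j with
  | 0 =>
    simp [shift, coef_zero]
  | 1 =>
    have CEa := coef_eq lam nu hl 1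
    have CEb := coef_eq (lam + 1) (nu - 1) (by linarith) 1
    rw [poch_one_eval, poch_one_eval, poch_one_eval, Nat.factorial_one, Nat.cast_one,
      one_mul] at CEa CEb
    simp only [shift, coef_zero, pow_zero, one_mul]
    have hv : lam + 1 + 1 / 2 ≠ 0 := by linarith
    apply mul_right_cancel₀ (show ((lam + 1 / 2) * ((lam + 1 + 1 / 2) *
      (4 * (lam + 1 / 2) * (lam + 3 / 2)))) ≠ 0 from mul_ne_zero h1 (mul_ne_zero hv hK))
    linear_combination (t * (lam + 1 + 1 / 2) * (4 * (lam + 1 / 2) * (lam + 3 / 2))) * CEa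
      - (t * (lam + 1 / 2) * (4 * (lam + 1 / 2) * (lam + 3 / 2))) * CEb
      + (4 * t * (lam + 1 / 2) * (lam + 1 + 1 / 2)) * hc
  | (n + 2) =>
    have hid := coefid lam nu hl n
    rw [← hc_def] at hid
    simp only [shift]
    linear_combination (t ^ (n + 2)) * hid

/-- Recurrence relating GGF-Fs with parameters `λ`, `λ+1` and `λ+2`. -/
theorem ggf_parameter_recurrence (lam nu : ℝ) (hlam : -(1 / 2) < lam) (hnu : 2 ≤ nu)
    (x : ℝ) (hx : x ∈ Set.Ioc (-1 : ℝ) 1) :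
    rG lam nu x =
      x * rG (lam + 1) (nu - 1) x -
        (nu - 1) * (nu + 2 * lam + 1) / (4 * (lam + 1 / 2) * (lam + 3 / 2)) *
          (1 - x ^ 2) * rG (lam + 2) (nu - 2) x := by
  obtain ⟨hx1, hx2⟩ := hx
  have hl0 : 0 < lam + 1 / 2 := by linarith
  have hl1 : 0 < (lam + 1) + 1 / 2 := by linarith
  have hl2 : 0 < (lam + 2) + 1 / 2 := by linarith
  set t : ℝ := (1 - x) / 2 with ht_def
  have ht : |t| < 1 := by
    rw [abs_lt]; constructor <;> [skip; skip] <;> rw [ht_def] <;> linarith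
  set Cst : ℝ := (nu - 1) * (nu + 2 * lam + 1) / (4 * (lam + 1 / 2) * (lam + 3 / 2)) with hC_def
  have hA : Summable (fun j : ℕ => coef lam nu j * t ^ j) := summable_coef _ _ _ hl0 ht
  have hB : Summable (fun j : ℕ => coef (lam + 1) (nu - 1) j * t ^ j) :=
    summable_coef _ _ _ hl1 ht
  have hE : Summable (fun j : ℕ => coef (lam + 2) (nu - 2) j * t ^ j) :=
    summable_coef _ _ _ hl2 ht
  have hBt : Summable (fun j : ℕ => coef (lam + 1) (nu - 1) j * t ^ j * t) := hB.mul_right t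
  have hEt : Summable (fun j : ℕ => coef (lam + 2) (nu - 2) j * t ^ j * t) := hE.mul_right t
  have hEt2 : Summable (fun j : ℕ => coef (lam + 2) (nu - 2) j * t ^ j * t ^ 2) :=
    hE.mul_right (t ^ 2)
  have hU : Summable (shift (fun j : ℕ => coef (lam + 1) (nu - 1) j * t ^ j * t)) :=
    summable_shift _ hBt
  have hV : Summable (shift (fun j : ℕ => coef (lam + 2) (nu - 2) j * t ^ j * t)) :=
    summable_shift _ hEt
  have hW : Summable (shift (shift (fun j : ℕ => coef (lam + 2) (nu - 2) j * t ^ j * t ^ 2))) :=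
    summable_shift _ (summable_shift _ hEt2)
  have hrA : rG lam nu x = ∑' j : ℕ, coef lam nu j * t ^ j := rfl
  have hrB : rG (lam + 1) (nu - 1) x = ∑' j : ℕ, coef (lam + 1) (nu - 1) j * t ^ j := rfl
  have hrE : rG (lam + 2) (nu - 2) x = ∑' j : ℕ, coef (lam + 2) (nu - 2) j * t ^ j := rfl
  rw [hrA, hrB, hrE]
  have step1 : (∑' j : ℕ, coef lam nu j * t ^ j) =
      ∑' j : ℕ, (coef (lam + 1) (nu - 1) j * t ^ j
        - 2 * shift (fun n => coef (lam + 1) (nu - 1) n * t ^ n * t) j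
        - (4 * Cst) * shift (fun n => coef (lam + 2) (nu - 2) n * t ^ n * t) j
        + (4 * Cst) * shift (shift (fun n => coef (lam + 2) (nu - 2) n * t ^ n * t ^ 2)) j) :=
    tsum_congr fun j => by rw [hC_def]; exact key lam nu t hl0 j
  rw [step1, Summable.tsum_add (((hB.sub (hU.mul_left 2)).sub (hV.mul_left (4 * Cst))))
      (hW.mul_left (4 * Cst)),
    Summable.tsum_sub (hB.sub (hU.mul_left 2)) (hV.mul_left (4 * Cst)),
    Summable.tsum_sub hB (hU.mul_left 2), tsum_mul_left, tsum_mul_left, tsum_mul_left,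
    tsum_shift _ hBt, tsum_shift _ (summable_shift _ hEt2), tsum_shift _ hEt, tsum_shift _ hEt2,
    tsum_mul_right, tsum_mul_right, tsum_mul_right]
  have hxt : x = 1 - 2 * t := by rw [ht_def]; ring
  rw [hxt]
  ring
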